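/- On the elliptic curve E : y^2 + 6244332976·xy + 2204421250641922174556630375·y = x^3 over Q, the point (0,0) is a rational point of order exactly 3, and the point with x-coordinate 2907919170263662 is a rational point of E (i.e. there exists a rational y making (2907919170263662, y) a point on E). -/

import Mathlib

def E : WeierstrassCurve.Affine ℚ :=
  ⟨6244332976, 0, 2204421250641922174556630375, 0, 0⟩

open WeierstrassCurve.Affine in
/-- On `E`, the point `(0,0)` has order exactly 3, and `x = 2907919170263662` is the
`x`-coordinate of a rational point of `E`. -/
theorem order_three_and_point :
    (∃ h : E.Nonsingular 0 0, addOrderOf (WeierstrassCurve.Affine.Point.some _ _ h) = 3) ∧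
    ∃ y : ℚ, E.Nonsingular 2907919170263662 y := by
  have h0 : E.Nonsingular 0 0 := by
    rw [WeierstrassCurve.Affine.nonsingular_zero]
    exact ⟨rfl, Or.inl (by norm_num [E])⟩
  constructor
  · refine ⟨h0, ?_⟩
    have hy : (0 : ℚ) ≠ E.negY 0 0 := by norm_num [WeierstrassCurve.Affine.negY, E]
    have hs : E.slope 0 0 0 0 = 0 := by
      rw [WeierstrassCurve.Affine.slope_of_Y_ne rfl hy]
      norm_num [WeierstrassCurve.Affine.negY, E]
    have hdbl : Point.some _ _ h0 + Point.some _ _ h0 = -Point.some _ _ h0 := by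
      rw [Point.add_self_of_Y_ne' hy]
      congr 1
      have hx3 : E.addX 0 0 (E.slope 0 0 0 0) = 0 := by
        rw [hs]; norm_num [E]
      have hy3 : E.negAddY 0 0 0 (E.slope 0 0 0 0) = 0 := by
        rw [hs]; norm_num [E]
      simp only [hx3, hy3]
    haveI : Fact (Nat.Prime 3) := ⟨by norm_num⟩
    apply addOrderOf_eq_prime (p := 3)
    · have : (3 : ℕ) • Point.some _ _ h0 =
          Point.some _ _ h0 + Point.some _ _ h0 + Point.some _ _ h0 := by
        rw [succ_nsmul, two_nsmul]
      rw [this, hdbl, neg_add_cancel]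
    · exact Point.some_ne_zero h0
  · refine ⟨11063428431634804552, ?_⟩
    rw [WeierstrassCurve.Affine.nonsingular_iff]
    constructor
    · rw [WeierstrassCurve.Affine.equation_iff]
      norm_num [E]
    · right
      norm_num [E]
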